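/- Let H be the 2×2 matrix of rational 1-forms in (u,t) with rows (0, 0) and (dt/(ut(1+t)), du/u + dt/(2t)). Then dH + H ∧ H = 0. -/
import Mathlib


/-- the connection matrix `H = [[0,0],[dt/(ut(1+t)), du/u + dt/(2t)]]`
satisfies the integrability condition `dH + H∧H = 0`, entrywise. Formalized with
an abstract de Rham datum on a characteristic-zero field `F` (such as `K(u,t)`). -/
theorem stmt7 (F : Type*) [Field F] [CharZero F]
    (Ω Ω2 : Type*) [AddCommGroup Ω] [Module F Ω] [AddCommGroup Ω2] [Module F Ω2]
    (d : Derivation ℤ F Ω)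
    (w : Ω →ₗ[F] Ω →ₗ[F] Ω2) (halt : ∀ η : Ω, w η η = 0)
    (d1 : Ω →+ Ω2)
    (hleib : ∀ (f : F) (η : Ω), d1 (f • η) = w (d f) η + f • d1 η)
    (hdd : ∀ f : F, d1 (d f) = 0)
    (u t : F) (hu : u ≠ 0) (ht : t ≠ 0) (ht1 : 1 + t ≠ 0)
    (H : Matrix (Fin 2) (Fin 2) Ω)
    (hH : H = !![0, 0; (u * t * (1 + t))⁻¹ • d t, u⁻¹ • d u + (2 * t)⁻¹ • d t]) :
    ∀ i j, d1 (H i j) + ∑ k, w (H i k) (H k j) = 0 := by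
  subst hH
  have hskew : ∀ x y : Ω, w x y = - w y x := by
    intro x y
    have h := halt (x + y)
    simp only [map_add, LinearMap.add_apply, halt, zero_add, add_zero] at h
    linear_combination (norm := abel) h
  have hdu : d (u⁻¹) = (-(u⁻¹ ^ 2)) • d u := by rw [Derivation.leibniz_inv]
  have hdt : d (t⁻¹) = (-(t⁻¹ ^ 2)) • d t := by rw [Derivation.leibniz_inv]
  have hd1t : d ((1 + t)⁻¹) = (-((1 + t)⁻¹ ^ 2)) • d t := by
    rw [Derivation.leibniz_inv]
    have : d (1 + t) = d t := by simp
    rw [this]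
  have hd2 : d ((2 : F)⁻¹) = 0 := by
    rw [Derivation.leibniz_inv]
    have : d (2 : F) = 0 := by
      have h2 : (2 : F) = ((2 : ℤ) : F) := by norm_num
      rw [h2, Derivation.map_intCast]
    rw [this, smul_zero]
  intro i j
  fin_cases i <;> fin_cases j <;>
    simp [Fin.sum_univ_two, hleib, hdd, mul_inv, hdu, hdt, hd1t, hd2, halt,
      hskew (d t) (d u), smul_smul] <;>
    match_scalars <;> field_simp <;> ring
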